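/- Let A be a complex C*-algebra and I a set. Let X denote the set of families x : I → A such that i ↦ (x i)*(x i) has an unconditional sum in A, and for x ∈ X write ‖x‖_X = ‖∑_{i∈I} (x i)*(x i)‖^{1/2}. Suppose (x_n) is a sequence in X that is Cauchy in the following sense: for every ε > 0 there is N such that for all m, n ≥ N the family i ↦ (x_n i − x_m i)*(x_n i − x_m i) has an unconditional sum of norm less than ε² (these differences are automatically in X). Then there exists x ∈ X such that ‖∑_{i∈I} (x_n i − x i)*(x_n i − x i)‖ → 0 as n → ∞, i.e. ‖x_n − x‖_X → 0. -/

import Mathlib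

open scoped InnerProductSpace

section Aux

variable {A : Type*} {I : Type*} [NonUnitalCStarAlgebra A] [PartialOrder A] [StarOrderedRing A]

/-- Triangle inequality for the finite ℓ²-seminorms, via the C⋆-module structure on pi types. -/
private lemma l2_tri (F : Finset I) (a b : I → A) :
    √‖∑ i ∈ F, star (a i + b i) * (a i + b i)‖ ≤
      √‖∑ i ∈ F, star (a i) * a i‖ + √‖∑ i ∈ F, star (b i) * b i‖ := by
  let e := (WithCStarModule.equiv A (∀ _ : F, A)).symm
  have hnorm : ∀ c : I → A, ‖e (fun i : F => star (c i))‖ = √‖∑ i ∈ F, star (c i) * c i‖ := by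
    intro c
    rw [WithCStarModule.pi_norm]
    congr 1
    rw [← Finset.sum_attach F (fun i => star (c i) * c i)]
    simp [e, WithCStarModule.inner_def]
  have hadd : e (fun i : F => star (a i + b i)) = e (fun i : F => star (a i)) + e (fun i : F => star (b i)) := by
    simp only [star_add]
    rfl
  calc √‖∑ i ∈ F, star (a i + b i) * (a i + b i)‖
      = ‖e (fun i : F => star (a i + b i))‖ := (hnorm (fun i => a i + b i)).symm
    _ = ‖e (fun i : F => star (a i)) + e (fun i : F => star (b i))‖ := by rw [hadd]
    _ ≤ ‖e (fun i : F => star (a i))‖ + ‖e (fun i : F => star (b i))‖ := norm_add_le _ _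
    _ = _ := by rw [hnorm, hnorm]

/-- Partial sums of an unconditionally summable family of positives are dominated in norm
by the sum. -/
private lemma l2_partial_le {p : I → A} {S : A} (hp : ∀ i, 0 ≤ p i) (h : HasSum p S)
    (F : Finset I) : ‖∑ i ∈ F, p i‖ ≤ ‖S‖ :=
  CStarAlgebra.norm_le_norm_of_nonneg_of_le (Finset.sum_nonneg fun i _ => hp i)
    (sum_le_hasSum F (fun i _ => hp i) h)

/-- If all partial sums are bounded in norm by `c`, so is the sum. -/
private lemma l2_norm_sum_le {p : I → A} {S : A} {c : ℝ} (h : HasSum p S)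
    (hb : ∀ F : Finset I, ‖∑ i ∈ F, p i‖ ≤ c) : ‖S‖ ≤ c :=
  le_of_tendsto h.norm (Filter.Eventually.of_forall hb)

/-- Comparison test for families of positive elements. -/
private lemma l2_summable_of_le {p q : I → A} (hp : ∀ i, 0 ≤ p i) (hpq : ∀ i, p i ≤ q i)
    (hq : Summable q) : Summable p := by
  rw [summable_iff_vanishing] at hq ⊢
  intro e he
  obtain ⟨ε, hε, hball⟩ := Metric.mem_nhds_iff.mp he
  obtain ⟨s, hs⟩ := hq (Metric.ball 0 ε) (Metric.ball_mem_nhds 0 hε)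
  refine ⟨s, fun t ht => hball ?_⟩
  have h1 : ‖∑ i ∈ t, p i‖ ≤ ‖∑ i ∈ t, q i‖ :=
    CStarAlgebra.norm_le_norm_of_nonneg_of_le (Finset.sum_nonneg fun i _ => hp i)
      (Finset.sum_le_sum fun i _ => hpq i)
  have h2 := hs t ht
  rw [Metric.mem_ball, dist_zero_right] at h2 ⊢
  exact lt_of_le_of_lt h1 h2

private lemma l2_sq_add_le (a b : A) :
    star (a + b) * (a + b) ≤ (star a * a + star a * a) + (star b * b + star b * b) := by
  have h : ((star a * a + star a * a) + (star b * b + star b * b)) - star (a + b) * (a + b)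
      = star (a - b) * (a - b) := by
    simp only [star_add, star_sub, add_mul, mul_add, sub_mul, mul_sub]
    abel
  exact sub_nonneg.mp (h ▸ star_mul_self_nonneg (a - b))

private lemma l2_sq_sub_comm (a b : A) :
    star (a - b) * (a - b) = star (b - a) * (b - a) := by
  rw [← neg_sub b a, star_neg, neg_mul, mul_neg, neg_neg]

private lemma l2_diff_summable {a b : I → A}
    (ha : Summable fun i => star (a i) * a i) (hb : Summable fun i => star (b i) * b i) :
    Summable fun i => star (a i - b i) * (a i - b i) := by
  refine l2_summable_of_le (fun i => star_mul_self_nonneg _) (fun i => ?_)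
    ((ha.add ha).add (hb.add hb))
  have := l2_sq_add_le (a i) (-(b i))
  simpa [sub_eq_add_neg] using this

end Aux

/-- Completeness of the ℓ²-type module of `A`-valued families: a sequence that is Cauchy
in the ℓ²-norm `‖x‖ = ‖∑ (x i)* (x i)‖^{1/2}` converges to a family in the module. -/
theorem l2_families_complete {A : Type*} [CStarAlgebra A] {I : Type*}
    (x : ℕ → I → A)
    (hx : ∀ n, ∃ S : A, HasSum (fun i => star (x n i) * x n i) S)
    (hcauchy : ∀ ε : ℝ, 0 < ε → ∃ N : ℕ, ∀ m ≥ N, ∀ n ≥ N,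
      ∃ S : A, HasSum (fun i => star (x n i - x m i) * (x n i - x m i)) S ∧
        ‖S‖ < ε ^ 2) :
    ∃ y : I → A, (∃ S : A, HasSum (fun i => star (y i) * y i) S) ∧
      ∀ ε : ℝ, 0 < ε → ∃ N : ℕ, ∀ n ≥ N,
        ∃ S : A, HasSum (fun i => star (x n i - y i) * (x n i - y i)) S ∧
          ‖S‖ < ε := by
  letI := CStarAlgebra.spectralOrder A
  haveI := CStarAlgebra.spectralOrderedRing A
  -- Step A: each coordinate sequence is Cauchy, hence convergent; let `y` be the limit.
  have hAcs : ∀ i, CauchySeq (fun n => x n i) := by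
    intro i
    rw [Metric.cauchySeq_iff]
    intro ε hε
    obtain ⟨N, hN⟩ := hcauchy ε hε
    refine ⟨N, fun m hm n hn => ?_⟩
    obtain ⟨S, hS, hSn⟩ := hN m hm n hn
    have h1 : ‖star (x n i - x m i) * (x n i - x m i)‖ ≤ ‖S‖ := by
      simpa using l2_partial_le (fun j => star_mul_self_nonneg _) hS {i}
    have h2 : ‖x n i - x m i‖ ^ 2 = ‖star (x n i - x m i) * (x n i - x m i)‖ := by
      rw [sq, CStarRing.norm_star_mul_self]
    have h3 : ‖x n i - x m i‖ ^ 2 < ε ^ 2 := lt_of_le_of_lt (h2 ▸ h1) hSn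
    have h4 := lt_of_pow_lt_pow_left₀ 2 hε.le h3
    rw [dist_eq_norm, norm_sub_rev]
    exact h4
  choose y hy using fun i => cauchySeq_tendsto_of_complete (hAcs i)
  -- Step B: uniform bound for finite partial sums of the differences with `y`.
  have key : ∀ ε : ℝ, 0 < ε → ∃ N, ∀ n ≥ N, ∀ F : Finset I,
      ‖∑ i ∈ F, star (x n i - y i) * (x n i - y i)‖ ≤ ε ^ 2 := by
    intro ε hε
    obtain ⟨N, hN⟩ := hcauchy ε hε
    refine ⟨N, fun n hn F => ?_⟩
    have htend : Filter.Tendsto (fun m => ∑ i ∈ F, star (x n i - x m i) * (x n i - x m i))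
        Filter.atTop (nhds (∑ i ∈ F, star (x n i - y i) * (x n i - y i))) := by
      refine tendsto_finset_sum _ fun i _ => ?_
      exact ((tendsto_const_nhds.sub (hy i)).star.mul (tendsto_const_nhds.sub (hy i)))
    refine le_of_tendsto htend.norm ?_
    filter_upwards [Filter.eventually_ge_atTop N] with m hm
    obtain ⟨S, hS, hSn⟩ := hN m hm n hn
    exact (l2_partial_le (fun j => star_mul_self_nonneg _) hS F).trans hSn.le
  -- Step C: for every `n`, the family of squared differences is summable.
  have hsum : ∀ n, Summable fun i => star (x n i - y i) * (x n i - y i) := by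
    intro n
    rw [summable_iff_vanishing]
    intro e he
    obtain ⟨δ, hδ, hball⟩ := Metric.mem_nhds_iff.mp he
    set ε' := √δ / 2 with hε'def
    have hε'pos : 0 < ε' := by positivity
    obtain ⟨N, hN⟩ := key ε' hε'pos
    obtain ⟨Sn, hSn⟩ := hx n
    obtain ⟨Sm, hSm⟩ := hx N
    have hdiff : Summable fun i => star (x n i - x N i) * (x n i - x N i) :=
      l2_diff_summable hSn.summable hSm.summable
    rw [summable_iff_vanishing] at hdiff
    obtain ⟨s, hs⟩ := hdiff (Metric.ball 0 (ε' ^ 2)) (Metric.ball_mem_nhds 0 (by positivity))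
    refine ⟨s, fun t ht => hball ?_⟩
    have h1 : √‖∑ i ∈ t, star (x n i - x N i) * (x n i - x N i)‖ < ε' := by
      have h := hs t ht
      rw [Metric.mem_ball, dist_zero_right] at h
      calc √‖∑ i ∈ t, star (x n i - x N i) * (x n i - x N i)‖
          < √(ε' ^ 2) := Real.sqrt_lt_sqrt (norm_nonneg _) h
        _ = ε' := by rw [Real.sqrt_sq hε'pos.le]
    have h2 : √‖∑ i ∈ t, star (x N i - y i) * (x N i - y i)‖ ≤ ε' := by
      calc √‖∑ i ∈ t, star (x N i - y i) * (x N i - y i)‖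
          ≤ √(ε' ^ 2) := Real.sqrt_le_sqrt (hN N le_rfl t)
        _ = ε' := by rw [Real.sqrt_sq hε'pos.le]
    have h3 := l2_tri t (fun i => x n i - x N i) (fun i => x N i - y i)
    simp only [sub_add_sub_cancel] at h3
    have h4 : √‖∑ i ∈ t, star (x n i - y i) * (x n i - y i)‖ < √δ := by
      calc √‖∑ i ∈ t, star (x n i - y i) * (x n i - y i)‖
          ≤ _ + _ := h3
        _ < ε' + ε' := add_lt_add_of_lt_of_le h1 h2
        _ = √δ := by rw [hε'def]; ring
    rw [Metric.mem_ball, dist_zero_right]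
    calc ‖∑ i ∈ t, star (x n i - y i) * (x n i - y i)‖
        = √‖∑ i ∈ t, star (x n i - y i) * (x n i - y i)‖ ^ 2 :=
          (Real.sq_sqrt (norm_nonneg _)).symm
      _ < √δ ^ 2 := by
          exact pow_lt_pow_left₀ h4 (Real.sqrt_nonneg _) two_ne_zero
      _ = δ := Real.sq_sqrt hδ.le
  -- Step D: `y` itself lies in the module.
  have hysum : Summable fun i => star (y i) * y i := by
    obtain ⟨S0, hS0⟩ := hx 0
    have h0 : Summable fun i => star (y i - x 0 i) * (y i - x 0 i) := by
      have := hsum 0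
      simpa only [l2_sq_sub_comm] using this
    refine l2_summable_of_le (fun i => star_mul_self_nonneg _) (fun i => ?_)
      ((h0.add h0).add (hS0.summable.add hS0.summable))
    have := l2_sq_add_le (y i - x 0 i) (x 0 i)
    simpa using this
  refine ⟨y, ⟨_, hysum.hasSum⟩, ?_⟩
  -- Step E: convergence of `x n` to `y` in the ℓ² norm.
  intro ε hε
  obtain ⟨N, hN⟩ := key (√ε / 2) (by positivity)
  refine ⟨N, fun n hn => ⟨_, (hsum n).hasSum, ?_⟩⟩
  have hb := l2_norm_sum_le (hsum n).hasSum (hN n hn)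
  calc ‖∑' i, star (x n i - y i) * (x n i - y i)‖ ≤ (√ε / 2) ^ 2 := hb
    _ = ε / 4 := by rw [div_pow, Real.sq_sqrt hε.le]; norm_num
    _ < ε := by linarith
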